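/- Let G be a finite simple graph on Fin n with edge weights w, let L(w) be the signed weighted Laplacian of (G, w), and let G⁻ be the spanning subgraph consisting of those edges e with w_e < 0. (a) If G⁻ is disconnected (as a spanning subgraph on all n vertices), then there exists a nonzero x : Fin n → ℝ with ∑_i x_i = 0 and xᵀ L(w) x ≥ 0; in particular L(w) is not negative definite on mean-zero vectors. (b) If moreover some edge e of G with w_e > 0 joins two vertices lying in distinct connected components of G⁻, then L(w) has a strictly positive eigenvalue. -/

import Mathlib

open Matrix

/-- The signed weighted Laplacian of a simple graph `G` on `Fin n` with real edge
weights `w` (with `w i j = w j i` on edges). -/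
def signedLaplacian {n : ℕ} (G : SimpleGraph (Fin n)) [DecidableRel G.Adj]
    (w : Fin n → Fin n → ℝ) : Matrix (Fin n) (Fin n) ℝ :=
  fun i j =>
    if i = j then ∑ k ∈ G.neighborFinset i, w i k
    else if G.Adj i j then -w i j else 0

/-- The spanning subgraph `G⁻` of `G` consisting of the edges with strictly negative
weight. -/
def negSubgraph {n : ℕ} (G : SimpleGraph (Fin n)) (w : Fin n → Fin n → ℝ) :
    SimpleGraph (Fin n) where
  Adj i j := G.Adj i j ∧ w i j < 0 ∧ w j i < 0
  symm := ⟨fun _ _ ⟨h, h1, h2⟩ => ⟨h.symm, h2, h1⟩⟩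
  loopless := ⟨fun i ⟨h, _, _⟩ => G.loopless.irrefl i h⟩

lemma mulVec_signedLaplacian {n : ℕ} (G : SimpleGraph (Fin n)) [DecidableRel G.Adj]
    (w : Fin n → Fin n → ℝ) (x : Fin n → ℝ) (i : Fin n) :
    (signedLaplacian G w).mulVec x i =
      (∑ k ∈ G.neighborFinset i, w i k) * x i
        + ∑ j ∈ G.neighborFinset i, (-w i j) * x j := by
  classical
  have hN : G.neighborFinset i = Finset.univ.filter (G.Adj i) := by
    ext j; simp
  have h0 : (signedLaplacian G w).mulVec x i =
      ∑ j, (if i = j then ∑ k ∈ G.neighborFinset i, w i k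
        else if G.Adj i j then -w i j else 0) * x j := rfl
  rw [h0]
  have h1 : ∀ j : Fin n,
      (if i = j then ∑ k ∈ G.neighborFinset i, w i k
        else if G.Adj i j then -w i j else 0) * x j
      = (if i = j then (∑ k ∈ G.neighborFinset i, w i k) * x j else 0)
        + (if G.Adj i j then (-w i j) * x j else 0) := by
    intro j
    by_cases h : i = j
    · subst h; simp [G.loopless.irrefl i]
    · simp [h]
  rw [Finset.sum_congr rfl fun j _ => h1 j, Finset.sum_add_distrib]
  congr 1
  · rw [Finset.sum_ite_eq]; simp
  · rw [hN, Finset.sum_filter]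

lemma quad_form_eq {n : ℕ} (G : SimpleGraph (Fin n)) [DecidableRel G.Adj]
    (w : Fin n → Fin n → ℝ) (x : Fin n → ℝ) :
    x ⬝ᵥ (signedLaplacian G w).mulVec x =
      ∑ i, ∑ j ∈ G.neighborFinset i, w i j * (x i * x i - x i * x j) := by
  classical
  have h0 : x ⬝ᵥ (signedLaplacian G w).mulVec x
      = ∑ i, x i * (signedLaplacian G w).mulVec x i := rfl
  rw [h0]
  refine Finset.sum_congr rfl fun i _ => ?_
  rw [mulVec_signedLaplacian, mul_add, Finset.sum_mul, Finset.mul_sum, Finset.mul_sum,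
    ← Finset.sum_add_distrib]
  exact Finset.sum_congr rfl fun j _ => by ring

lemma symm_signedLaplacian {n : ℕ} (G : SimpleGraph (Fin n)) [DecidableRel G.Adj]
    (w : Fin n → Fin n → ℝ) (hsymm : ∀ i j : Fin n, w i j = w j i) :
    (signedLaplacian G w).IsHermitian := by
  ext p q
  simp only [conjTranspose_apply, star_trivial]
  by_cases h : p = q
  · subst h; rfl
  · simp [signedLaplacian, h, Ne.symm h, G.adj_comm, hsymm q p]

lemma cut_vector {n : ℕ} (G : SimpleGraph (Fin n)) [DecidableRel G.Adj]
    (w : Fin n → Fin n → ℝ) (hsymm : ∀ i j : Fin n, w i j = w j i)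
    (a b : Fin n) (hab : ¬ (negSubgraph G w).Reachable a b) :
    ∃ x : Fin n → ℝ, x ≠ 0 ∧ ∑ i, x i = 0 ∧
      0 ≤ x ⬝ᵥ (signedLaplacian G w).mulVec x ∧
      (G.Adj a b → 0 < w a b → 0 < x ⬝ᵥ (signedLaplacian G w).mulVec x) := by
  classical
  set H := negSubgraph G w with hH
  set S : Finset (Fin n) := Finset.univ.filter (fun i => H.Reachable a i) with hS
  set c : ℕ := S.card with hc
  set x : Fin n → ℝ := fun i => if H.Reachable a i then ((n : ℝ) - c) else -(c : ℝ) with hx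
  have hra : H.Reachable a a := SimpleGraph.Reachable.refl a
  have haS : a ∈ S := by simp [hS, hra]
  have hbS : b ∉ S := by simp [hS, hab]
  have hcpos : 0 < c := Finset.card_pos.mpr ⟨a, haS⟩
  have hclt : c < n := by
    have : S ⊂ Finset.univ := ⟨Finset.subset_univ S, fun h => hbS (h (Finset.mem_univ b))⟩
    simpa using Finset.card_lt_card this
  have hcR : (0 : ℝ) < c := by exact_mod_cast hcpos
  have hncR : (0 : ℝ) < (n : ℝ) - c := by
    have : (c : ℝ) < n := by exact_mod_cast hclt
    linarith
  have hxa : x a = (n : ℝ) - c := by simp [hx, hra]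
  have hxb : x b = -(c : ℝ) := by simp [hx, hab]
  -- each summand of the quadratic form is nonnegative
  have hterm : ∀ i : Fin n, ∀ j ∈ G.neighborFinset i,
      0 ≤ w i j * (x i * x i - x i * x j) := by
    intro i j hj
    have hadj : G.Adj i j := (SimpleGraph.mem_neighborFinset G i j).mp hj
    by_cases hi : H.Reachable a i <;> by_cases hjr : H.Reachable a j
    · have : x i = x j := by simp [hx, hi, hjr]
      rw [this]; simp
    · -- crossing edge: nonnegative weight
      have hnadj : ¬ H.Adj i j := fun h => hjr (hi.trans h.reachable)
      have hw : 0 ≤ w i j := by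
        by_contra hneg
        push_neg at hneg
        exact hnadj (show G.Adj i j ∧ w i j < 0 ∧ w j i < 0 from ⟨hadj, hneg, by rw [← hsymm i j]; exact hneg⟩)
      have hxi : x i = (n : ℝ) - c := by simp [hx, hi]
      have hxj : x j = -(c : ℝ) := by simp [hx, hjr]
      apply mul_nonneg hw
      rw [hxi, hxj]; nlinarith
    · have hnadj : ¬ H.Adj i j := fun h => hi (hjr.trans h.symm.reachable)
      have hw : 0 ≤ w i j := by
        by_contra hneg
        push_neg at hneg
        exact hnadj (show G.Adj i j ∧ w i j < 0 ∧ w j i < 0 from ⟨hadj, hneg, by rw [← hsymm i j]; exact hneg⟩)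
      have hxi : x i = -(c : ℝ) := by simp [hx, hi]
      have hxj : x j = (n : ℝ) - c := by simp [hx, hjr]
      apply mul_nonneg hw
      rw [hxi, hxj]; nlinarith
    · have : x i = x j := by simp [hx, hi, hjr]
      rw [this]; simp
  refine ⟨x, ?_, ?_, ?_, ?_⟩
  · intro h
    have := congrFun h a
    rw [hxa] at this
    simp at this
    linarith
  · -- mean zero
    have hsum : ∑ i, x i = ∑ i ∈ Finset.univ.filter (fun i => H.Reachable a i), ((n : ℝ) - c)
        + ∑ i ∈ Finset.univ.filter (fun i => ¬ H.Reachable a i), (-(c : ℝ)) := by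
      rw [hx, Finset.sum_ite]
    rw [hsum, Finset.sum_const, Finset.sum_const]
    have hcard : (Finset.univ.filter (fun i => ¬ H.Reachable a i)).card = n - c := by
      have := Finset.card_filter_add_card_filter_not
        (s := (Finset.univ : Finset (Fin n))) (p := fun i => H.Reachable a i)
      simp only [Finset.card_univ, Fintype.card_fin] at this
      rw [← hS] at this
      omega
    rw [hcard]
    have hcast : ((n - c : ℕ) : ℝ) = (n : ℝ) - c := by
      rw [Nat.cast_sub (le_of_lt hclt)]
    simp only [nsmul_eq_mul, hcast]
    ring
  · rw [quad_form_eq]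
    exact Finset.sum_nonneg fun i _ => Finset.sum_nonneg (hterm i)
  · intro hadj hpos
    rw [quad_form_eq]
    have hbmem : b ∈ G.neighborFinset a := (SimpleGraph.mem_neighborFinset G a b).mpr hadj
    have hkey : 0 < w a b * (x a * x a - x a * x b) := by
      apply mul_pos hpos
      rw [hxa, hxb]
      nlinarith
    have hinner : 0 < ∑ j ∈ G.neighborFinset a, w a j * (x a * x a - x a * x j) :=
      Finset.sum_pos' (hterm a) ⟨b, hbmem, hkey⟩
    exact Finset.sum_pos'
      (fun i _ => Finset.sum_nonneg (hterm i))
      ⟨a, Finset.mem_univ a, hinner⟩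

/-- (a) If the subgraph `G⁻` of negatively weighted edges is
disconnected, the signed Laplacian is not negative definite on mean-zero vectors;
(b) if additionally some positively weighted edge of `G` joins two distinct connected
components of `G⁻`, then the signed Laplacian has a strictly positive eigenvalue. -/
theorem disconnected_negative_part (n : ℕ)
    (G : SimpleGraph (Fin n)) [DecidableRel G.Adj]
    (w : Fin n → Fin n → ℝ) (hsymm : ∀ i j : Fin n, w i j = w j i)
    (hdis : ¬ (negSubgraph G w).Preconnected) :
    (∃ x : Fin n → ℝ, x ≠ 0 ∧ ∑ i, x i = 0 ∧
        0 ≤ x ⬝ᵥ (signedLaplacian G w).mulVec x) ∧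
    ((∃ i j : Fin n, G.Adj i j ∧ 0 < w i j ∧ ¬ (negSubgraph G w).Reachable i j) →
      ∃ μ : ℝ, 0 < μ ∧ ∃ v : Fin n → ℝ, v ≠ 0 ∧
        (signedLaplacian G w).mulVec v = μ • v) := by
  classical
  constructor
  · simp only [SimpleGraph.Preconnected, not_forall] at hdis
    obtain ⟨a, b, hab⟩ := hdis
    obtain ⟨x, h1, h2, h3, -⟩ := cut_vector G w hsymm a b hab
    exact ⟨x, h1, h2, h3⟩
  · rintro ⟨i, j, hadj, hw, hreach⟩
    obtain ⟨x, -, -, -, hstrict⟩ := cut_vector G w hsymm i j hreach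
    have hq : 0 < x ⬝ᵥ (signedLaplacian G w).mulVec x := hstrict hadj hw
    set L := signedLaplacian G w with hLdef
    have hL : L.IsHermitian := symm_signedLaplacian G w hsymm
    by_contra hcon
    push_neg at hcon
    have hnegL : (-L).PosSemidef := by
      have hHerm : (-L).IsHermitian := hL.neg
      apply hHerm.posSemidef_iff_eigenvalues_nonneg.mpr
      intro k
      by_contra hk
      push_neg at hk
      have hv := hHerm.mulVec_eigenvectorBasis k
      have hvne : (⇑(hHerm.eigenvectorBasis k) : Fin n → ℝ) ≠ 0 := by
        have := hHerm.eigenvectorBasis.orthonormal.ne_zero k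
        intro h
        apply this
        ext i
        exact congrFun h i
      have h2 : -(L *ᵥ ⇑(hHerm.eigenvectorBasis k))
          = hHerm.eigenvalues k • ⇑(hHerm.eigenvectorBasis k) := by
        rw [← Matrix.neg_mulVec]; exact hv
      have h3 : L *ᵥ ⇑(hHerm.eigenvectorBasis k)
          = (-hHerm.eigenvalues k) • ⇑(hHerm.eigenvectorBasis k) := by
        rw [neg_smul, ← h2, neg_neg]
      exact hcon (-hHerm.eigenvalues k) (by simp only [Pi.zero_apply] at hk; linarith) _ hvne h3
    have h4 := hnegL.dotProduct_mulVec_nonneg x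
    have hstar : star x = x := by
      funext i; simp
    rw [hstar, Matrix.neg_mulVec, dotProduct_neg] at h4
    linarith
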